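/- Define generalized Bernoulli numbers b_i^{(k)} := i!·[t^i] (t/(e^t−1))^k. Then for all n ≥ k ≥ 0, the signed Stirling numbers of the first kind satisfy s(n,k) = C(n,k) · Σ_{i=0}^{n−k} b_i^{(k)} · s(n−k, i). -/

import Mathlib

/-- Signed Stirling numbers of the first kind, via the recurrence
`s(n+1,k) = s(n,k-1) - n·s(n,k)`. -/
def stirling1 : ℕ → ℕ → ℤ
  | 0, 0 => 1
  | 0, _ + 1 => 0
  | n + 1, 0 => -(n : ℤ) * stirling1 n 0
  | n + 1, k + 1 => stirling1 n k - (n : ℤ) * stirling1 n (k + 1)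

/-- `(e^t-1)/t = Σ_{m≥0} t^m/(m+1)!` as a formal power series over `ℚ`. -/
noncomputable def expSubOneDivT : PowerSeries ℚ :=
  PowerSeries.mk fun m => (1 : ℚ) / (m + 1).factorial

/-- The generalized Bernoulli numbers `b_i^{(k)} = i!·[t^i](t/(e^t-1))^k`. -/
noncomputable def bernoulliGen (i k : ℕ) : ℚ :=
  (i.factorial : ℚ) * PowerSeries.coeff i (expSubOneDivT⁻¹ ^ k)

open PowerSeries Finset

lemma stirling1_eq_zero (n k : ℕ) (h : n < k) : stirling1 n k = 0 := by
  induction n generalizing k with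
  | zero => cases k with
    | zero => omega
    | succ k => simp [stirling1]
  | succ n ih =>
    cases k with
    | zero => omega
    | succ k =>
      rw [stirling1, ih k (by omega), ih (k+1) (by omega)]
      ring

lemma stirling1_succ_zero (n : ℕ) : stirling1 (n+1) 0 = 0 := by
  induction n with
  | zero => simp [stirling1]
  | succ n ih => rw [stirling1, ih]; ring

noncomputable def Lser : PowerSeries ℚ :=
  PowerSeries.mk fun m => if m = 0 then 0 else (-1 : ℚ)^(m+1) / m

noncomputable def user : PowerSeries ℚ := PowerSeries.mk fun m => (-1 : ℚ)^m / (m+1)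

lemma L_eq_X_mul_u : Lser = X * user := by
  ext m
  cases m with
  | zero => simp [Lser, user]
  | succ m =>
    rw [coeff_succ_X_mul, Lser, user, coeff_mk, coeff_mk]
    simp [pow_succ]

noncomputable def vser : PowerSeries ℚ := PowerSeries.mk fun m => (-1 : ℚ)^m

lemma one_add_X_mul_v : (1 + X) * vser = 1 := by
  ext m
  rw [add_mul, one_mul]
  cases m with
  | zero => simp [vser]
  | succ m => simp [vser, coeff_succ_X_mul, pow_succ]

lemma deriv_L : PowerSeries.derivative ℚ Lser = vser := by
  ext m
  rw [coeff_derivative, Lser, vser, coeff_mk, coeff_mk]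
  have : ((m:ℚ)+1) ≠ 0 := by positivity
  rw [if_neg (show m + 1 ≠ 0 by omega)]
  push_cast
  field_simp
  ring

lemma coeff_L_pow (n k : ℕ) :
    (coeff n) (Lser ^ k) = (k.factorial : ℚ) * (stirling1 n k : ℚ) / (n.factorial : ℚ) := by
  induction n generalizing k with
  | zero =>
    rw [coeff_zero_eq_constantCoeff, map_pow]
    have h0 : constantCoeff Lser = 0 := by simp [Lser, ← coeff_zero_eq_constantCoeff]
    cases k with
    | zero => simp [stirling1]
    | succ k => simp [h0, stirling1, zero_pow]
  | succ n ih =>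
    cases k with
    | zero => simp [stirling1_succ_zero]
    | succ k =>
      have key : (1 + X) * PowerSeries.derivative ℚ (Lser ^ (k+1)) = (k+1) • Lser ^ k := by
        rw [Derivation.leibniz_pow, deriv_L, smul_eq_mul, Nat.add_sub_cancel, mul_smul_comm,
          show (1+X) * (Lser^k * vser) = Lser^k * ((1+X)*vser) by ring, one_add_X_mul_v, mul_one]
      have hc := congrArg (coeff n) key
      rw [map_nsmul, nsmul_eq_mul, add_mul, one_mul, map_add, coeff_derivative] at hc
      have hXd : (coeff n) (X * PowerSeries.derivative ℚ (Lser ^ (k+1)))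
          = (n : ℚ) * (coeff n) (Lser ^ (k+1)) := by
        cases n with
        | zero => simp
        | succ n => rw [coeff_succ_X_mul, coeff_derivative]; push_cast; ring
      rw [hXd, ih k, ih (k+1)] at hc
      have hn1 : ((n:ℚ)+1) ≠ 0 := by positivity
      have hnf : ((n.factorial : ℚ)) ≠ 0 := by exact_mod_cast n.factorial_ne_zero
      simp only [Nat.factorial_succ] at hc
      push_cast at hc
      rw [stirling1]
      push_cast [Nat.factorial_succ]
      field_simp at hc ⊢
      ring_nf at hc ⊢
      linear_combination hc

lemma coeff_Lpow_zero {m i : ℕ} (h : m < i) : PowerSeries.coeff m (Lser ^ i) = 0 := by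
  rw [L_eq_X_mul_u, mul_pow, coeff_X_pow_mul', if_neg (by omega)]

noncomputable def compL (f : PowerSeries ℚ) : PowerSeries ℚ :=
  PowerSeries.mk fun m => ∑ i ∈ range (m+1), PowerSeries.coeff i f * PowerSeries.coeff m (Lser ^ i)

lemma coeff_compL (f : PowerSeries ℚ) (m : ℕ) :
    PowerSeries.coeff m (compL f) =
      ∑ i ∈ range (m+1), PowerSeries.coeff i f * PowerSeries.coeff m (Lser ^ i) :=
  coeff_mk _ _

lemma coeff_eval₂_L (P : Polynomial ℚ) (m : ℕ) :
    PowerSeries.coeff m (P.eval₂ (C : ℚ →+* PowerSeries ℚ) Lser) =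
      ∑ i ∈ range (m+1), P.coeff i * PowerSeries.coeff m (Lser ^ i) := by
  have hlt : P.natDegree < max (P.natDegree + 1) (m + 1) :=
    lt_of_lt_of_le (Nat.lt_succ_self _) (le_max_left _ _)
  rw [Polynomial.eval₂_eq_sum_range' (C : ℚ →+* PowerSeries ℚ) hlt Lser, map_sum]
  simp only [coeff_C_mul]
  refine (Finset.sum_subset (Finset.range_subset_range.2 (le_max_right (P.natDegree+1) (m+1)))
    fun i _ hi => ?_).symm
  rw [coeff_Lpow_zero (by simp at hi; omega), mul_zero]

lemma coeff_compL_eval (f : PowerSeries ℚ) {m N : ℕ} (h : m < N) :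
    PowerSeries.coeff m (compL f) =
      PowerSeries.coeff m ((PowerSeries.trunc N f).eval₂ (C : ℚ →+* PowerSeries ℚ) Lser) := by
  rw [coeff_eval₂_L, coeff_compL]
  refine Finset.sum_congr rfl fun i hi => ?_
  rw [PowerSeries.coeff_trunc, if_pos (by simp at hi; omega)]

lemma compL_one : compL 1 = 1 := by
  ext m
  rw [coeff_compL_eval 1 (Nat.lt_succ_self m), trunc_one, Polynomial.eval₂_one]

lemma compL_mul (f g : PowerSeries ℚ) : compL (f * g) = compL f * compL g := by
  ext m
  set N := m + 1
  rw [coeff_compL_eval (f*g) (Nat.lt_succ_self m), PowerSeries.coeff_mul]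
  have hrhs : ∀ p ∈ antidiagonal m,
      PowerSeries.coeff p.1 (compL f) * PowerSeries.coeff p.2 (compL g) =
      PowerSeries.coeff p.1 ((trunc N f).eval₂ (C : ℚ →+* PowerSeries ℚ) Lser) *
        PowerSeries.coeff p.2 ((trunc N g).eval₂ (C : ℚ →+* PowerSeries ℚ) Lser) := by
    intro p hp
    rw [HasAntidiagonal.mem_antidiagonal] at hp
    rw [coeff_compL_eval f (show p.1 < N by omega), coeff_compL_eval g (show p.2 < N by omega)]
  rw [Finset.sum_congr rfl hrhs, ← PowerSeries.coeff_mul, ← Polynomial.eval₂_mul]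
  rw [coeff_eval₂_L, coeff_eval₂_L]
  refine Finset.sum_congr rfl fun i hi => ?_
  simp only [mem_range] at hi
  congr 1
  have h1 : (PowerSeries.trunc N (f * g)).coeff i = PowerSeries.coeff i (f * g) := by
    rw [PowerSeries.coeff_trunc, if_pos (by omega)]
  have h2 : (PowerSeries.trunc N f * PowerSeries.trunc N g).coeff i
      = PowerSeries.coeff i (f * g) := by
    rw [← Polynomial.coeff_coe, Polynomial.coe_mul]
    exact (PowerSeries.coeff_mul_eq_coeff_trunc_mul_trunc f g (show i < N by omega)).symm
  rw [h1, h2]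

lemma compL_X : compL X = Lser := by
  ext m
  rw [coeff_compL, Finset.sum_eq_single 1]
  · rw [pow_one, PowerSeries.coeff_X, if_pos rfl, one_mul]
  · intro i _ hi
    rw [PowerSeries.coeff_X, if_neg hi, zero_mul]
  · intro h1
    simp only [mem_range] at h1
    have hm : m = 0 := by omega
    subst hm
    rw [coeff_Lpow_zero (by omega), mul_zero]

lemma stirling1_sum_rec (m : ℕ) :
    ∑ i ∈ range (m+2), stirling1 (m+1) i = (1 - (m:ℤ)) * ∑ i ∈ range (m+1), stirling1 m i := by
  have hs : ∑ i ∈ range (m+1), stirling1 m (i+1)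
      = ∑ i ∈ range (m+1), stirling1 m i - stirling1 m 0 := by
    have h1 := Finset.sum_range_succ' (fun i => stirling1 m i) (m+1)
    have h2 := Finset.sum_range_succ (fun i => stirling1 m i) (m+1)
    rw [stirling1_eq_zero m (m+1) (by omega), add_zero] at h2
    linear_combination h2 - h1
  rw [Finset.sum_range_succ']
  simp only [show ∀ i, stirling1 (m+1) (i+1) = stirling1 m i - (m:ℤ) * stirling1 m (i+1) from
    fun i => by rw [stirling1], Finset.sum_sub_distrib]
  rw [← Finset.mul_sum, hs, stirling1_succ_zero]
  have hm0 : (m:ℤ) * stirling1 m 0 = 0 := by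
    cases m with
    | zero => simp
    | succ m => rw [stirling1_succ_zero]; ring
  linear_combination hm0

lemma stirling1_sum (m : ℕ) (h : 2 ≤ m) : ∑ i ∈ range (m+1), stirling1 m i = 0 := by
  induction m with
  | zero => omega
  | succ m ih =>
    rcases Nat.lt_or_ge m 2 with h2 | h2
    · have hm : m = 1 := by omega
      subst hm
      norm_num [Finset.sum_range_succ, stirling1]
    · rw [show m+1+1 = m+2 from rfl, stirling1_sum_rec, ih h2, mul_zero]

lemma coeff_E (i : ℕ) :
    PowerSeries.coeff i (X * expSubOneDivT) = if i = 0 then 0 else (1:ℚ) / i.factorial := by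
  cases i with
  | zero => simp
  | succ i =>
    rw [coeff_succ_X_mul, expSubOneDivT, coeff_mk, if_neg (Nat.succ_ne_zero i)]

lemma compL_E : compL (X * expSubOneDivT) = X := by
  ext m
  rw [coeff_compL]
  have hterm : ∀ i ∈ range (m+1), PowerSeries.coeff i (X * expSubOneDivT) *
      PowerSeries.coeff m (Lser ^ i)
      = if i = 0 then 0 else (stirling1 m i : ℚ) / m.factorial := by
    intro i _
    rw [coeff_E, coeff_L_pow]
    cases i with
    | zero => simp
    | succ i =>
      rw [if_neg (Nat.succ_ne_zero i), if_neg (Nat.succ_ne_zero i)]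
      have : ((i+1).factorial : ℚ) ≠ 0 := by exact_mod_cast (i+1).factorial_ne_zero
      field_simp
  rw [Finset.sum_congr rfl hterm, Finset.sum_range_succ']
  simp only [if_pos rfl, add_zero]
  cases m with
  | zero => simp
  | succ m =>
    have hI : ∀ i ∈ range (m+1), (if i + 1 = 0 then (0:ℚ) else
        (stirling1 (m+1) (i+1) : ℚ) / (m+1).factorial)
        = (stirling1 (m+1) (i+1) : ℚ) / (m+1).factorial := by
      intro i _
      rw [if_neg (Nat.succ_ne_zero i)]
    rw [Finset.sum_congr rfl hI, ← Finset.sum_div]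
    have hz : (∑ i ∈ range (m+1), stirling1 (m+1) (i+1))
        = (∑ i ∈ range (m+2), stirling1 (m+1) i) - stirling1 (m+1) 0 := by
      rw [Finset.sum_range_succ' (fun i => stirling1 (m+1) i) (m+1)]
      ring
    have hsum : ∑ i ∈ range (m+1), (stirling1 (m+1) (i+1) : ℚ)
        = ((∑ i ∈ range (m+2), stirling1 (m+1) i : ℤ) : ℚ) := by
      rw [stirling1_succ_zero, sub_zero] at hz
      rw [← hz]
      push_cast
      rfl
    rw [hsum]
    cases m with
    | zero =>
      norm_num [Finset.sum_range_succ, stirling1]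
    | succ m =>
      rw [stirling1_sum (m+2) (by omega)]
      have : PowerSeries.coeff (m+2) (X : PowerSeries ℚ) = 0 := by
        rw [PowerSeries.coeff_X, if_neg (by omega)]
      rw [this]
      norm_num

lemma constantCoeff_g : constantCoeff expSubOneDivT = 1 := by
  rw [← coeff_zero_eq_constantCoeff, expSubOneDivT, coeff_mk]
  norm_num

lemma g_mul_inv : expSubOneDivT * expSubOneDivT⁻¹ = 1 :=
  PowerSeries.mul_inv_cancel _ (by rw [constantCoeff_g]; exact one_ne_zero)

lemma u_mul_compL_g : user * compL expSubOneDivT = 1 := by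
  have h : X * (user * compL expSubOneDivT) = X * 1 := by
    rw [mul_one, ← mul_assoc, ← L_eq_X_mul_u, ← compL_X, ← compL_mul, compL_E]
  exact mul_left_cancel₀ PowerSeries.X_ne_zero h

lemma compL_g_inv : compL expSubOneDivT⁻¹ = user := by
  calc compL expSubOneDivT⁻¹ = (user * compL expSubOneDivT) * compL expSubOneDivT⁻¹ := by
        rw [u_mul_compL_g, one_mul]
    _ = user * compL (expSubOneDivT * expSubOneDivT⁻¹) := by rw [compL_mul]; ring
    _ = user := by rw [g_mul_inv, compL_one, mul_one]

lemma compL_g_inv_pow (k : ℕ) : compL (expSubOneDivT⁻¹ ^ k) = user ^ k := by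
  induction k with
  | zero => simpa using compL_one
  | succ k ih => rw [pow_succ, pow_succ, compL_mul, ih, compL_g_inv]

/-- `s(n,k) = C(n,k)·Σ_{i=0}^{n-k} b_i^{(k)}·s(n-k,i)` for `n ≥ k ≥ 0`. -/
theorem stirling1_generalizedBernoulli (n k : ℕ) (hkn : k ≤ n) :
    (stirling1 n k : ℚ) =
      (n.choose k : ℚ) * ∑ i ∈ Finset.range (n - k + 1),
        bernoulliGen i k * (stirling1 (n - k) i : ℚ) := by
  set m := n - k with hm
  have hnm : n = m + k := by omega
  -- left side: coeff m (user^k)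
  have h1 : PowerSeries.coeff m (user ^ k)
      = (k.factorial : ℚ) * (stirling1 n k : ℚ) / (n.factorial : ℚ) := by
    have : PowerSeries.coeff m (user ^ k) = PowerSeries.coeff (m + k) (Lser ^ k) := by
      rw [L_eq_X_mul_u, mul_pow, coeff_X_pow_mul]
    rw [this, ← hnm, coeff_L_pow]
  -- right side
  have h2 : PowerSeries.coeff m (user ^ k)
      = (∑ i ∈ range (m+1), bernoulliGen i k * (stirling1 m i : ℚ)) / (m.factorial : ℚ) := by
    rw [← compL_g_inv_pow, coeff_compL, Finset.sum_div]
    refine Finset.sum_congr rfl fun i _ => ?_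
    rw [coeff_L_pow, bernoulliGen]
    have : ((i.factorial : ℚ)) ≠ 0 := by exact_mod_cast i.factorial_ne_zero
    field_simp
  rw [h1] at h2
  have hkf : ((k.factorial : ℚ)) ≠ 0 := by exact_mod_cast k.factorial_ne_zero
  have hnf : ((n.factorial : ℚ)) ≠ 0 := by exact_mod_cast n.factorial_ne_zero
  have hmf : ((m.factorial : ℚ)) ≠ 0 := by exact_mod_cast m.factorial_ne_zero
  have hch : (n.choose k : ℚ) = (n.factorial : ℚ) / ((k.factorial : ℚ) * (m.factorial : ℚ)) := by
    rw [hm]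
    exact Nat.cast_choose ℚ hkn
  rw [hch]
  field_simp at h2 ⊢
  linear_combination h2
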